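/- Let (a_k)_{k≥1} be complex numbers with sup_{k≥1} |a_k| ≤ M for some finite M, and let (c_k)_{k≥0} be defined from (a_k) by the MA recursion. Then for every complex number z with |z| < 1, the series Σ_{k≥1} a_k z^k and Σ_{k≥0} c_k z^k converge absolutely and Σ_{k≥0} c_k z^k = exp(Σ_{k≥1} a_k z^k). -/

import Mathlib

open Filter Topology
open scoped NNReal ENNReal

/-- The MA recursion: `c 0 = 1` and
`c (k+1) = ∑_{j=0}^{k} (1 - j/(k+1)) * a (k+1-j) * c j`. -/
def IsMARec (a c : ℕ → ℂ) : Prop :=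
  c 0 = 1 ∧
    ∀ k : ℕ, c (k + 1) =
      ∑ j ∈ Finset.range (k + 1), (1 - (j : ℂ) / ((k : ℂ) + 1)) * a (k + 1 - j) * c j

/-- If `sup_{k ≥ 1} ‖a k‖ ≤ M` and `(c k)` is obtained from `(a k)` by the MA recursion,
then for every `z` with `‖z‖ < 1` the series `∑_{k ≥ 1} a k * z ^ k` and `∑_{k ≥ 0} c k * z ^ k`
converge absolutely and `∑_{k ≥ 0} c k * z ^ k = exp (∑_{k ≥ 1} a k * z ^ k)`. -/

lemma MAaux_derivSeries_apply_one (p : FormalMultilinearSeries ℂ ℂ ℂ) (n : ℕ) (z : ℂ) :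
    p.derivSeries n (fun _ ↦ z) 1 = (((n : ℂ) + 1) * p.coeff (n + 1)) * z ^ n := by
  have h1 : (fun _ : Fin n ↦ z) = fun _ : Fin n ↦ z • (1 : ℂ) := by funext i; simp
  rw [h1, (p.derivSeries n).map_smul_univ (fun _ : Fin n ↦ z) (fun _ ↦ (1 : ℂ))]
  rw [ContinuousLinearMap.smul_apply, p.derivSeries_apply_diag n (1 : ℂ)]
  simp only [Finset.prod_const, Finset.card_univ, Fintype.card_fin, nsmul_eq_mul,
    smul_eq_mul, FormalMultilinearSeries.coeff, Pi.one_def, Nat.cast_add, Nat.cast_one]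
  ring

lemma MAaux_ofScalars_ball (α : ℕ → ℂ) (G : ℂ → ℂ)
    (h : ∀ z : ℂ, ‖z‖ < 1 → HasSum (fun n ↦ α n * z ^ n) (G z)) :
    HasFPowerSeriesOnBall G (FormalMultilinearSeries.ofScalars ℂ α) 0 1 := by
  constructor
  · apply ENNReal.le_of_forall_nnreal_lt
    intro r hr
    have hr1 : ‖((r : ℝ) : ℂ)‖ < 1 := by
      rw [Complex.norm_real, Real.norm_eq_abs, abs_of_nonneg r.coe_nonneg]
      exact_mod_cast hr
    have hs := (h _ hr1).summable
    apply FormalMultilinearSeries.le_radius_of_tendsto _ (l := 0)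
    have ht := hs.tendsto_atTop_zero.norm
    simp only [norm_zero] at ht
    apply ht.congr
    intro n
    rw [FormalMultilinearSeries.ofScalars_norm, norm_mul, norm_pow, Complex.norm_real,
      Real.norm_eq_abs, abs_of_nonneg r.coe_nonneg]
  · exact (by norm_num : (0 : ℝ≥0∞) < 1)
  · intro y hy
    have hy1 : ‖y‖ < 1 := by
      have := EMetric.mem_ball.1 hy
      rw [edist_zero_right, ← ofReal_norm, ENNReal.ofReal_lt_one] at this
      exact this
    have h2 := h y hy1
    rw [show (0 : ℂ) + y = y by ring]
    apply h2.congr_fun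
    intro n
    rw [FormalMultilinearSeries.ofScalars_apply_eq, smul_eq_mul]

lemma MAaux_coeff_unique (α β : ℕ → ℂ) (G : ℂ → ℂ)
    (hα : ∀ z : ℂ, ‖z‖ < 1 → HasSum (fun n ↦ α n * z ^ n) (G z))
    (hβ : ∀ z : ℂ, ‖z‖ < 1 → HasSum (fun n ↦ β n * z ^ n) (G z)) : α = β :=
  (FormalMultilinearSeries.ofScalars_series_eq_iff ℂ α β).mp <|
    (MAaux_ofScalars_ball α G hα).hasFPowerSeriesAt.eq_formalMultilinearSeries
      (MAaux_ofScalars_ball β G hβ).hasFPowerSeriesAt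

lemma MAaux_exists_series (F : ℂ → ℂ)
    (hd : ∀ z : ℂ, ‖z‖ < 1 → DifferentiableAt ℂ F z) :
    ∃ p : FormalMultilinearSeries ℂ ℂ ℂ, HasFPowerSeriesOnBall F p 0 1 := by
  have h : ∀ R : ℝ≥0, 0 < R → (R : ℝ) < 1 →
      HasFPowerSeriesOnBall F (cauchyPowerSeries F 0 R) 0 R := by
    intro R hR0 hR1
    refine DifferentiableOn.hasFPowerSeriesOnBall ?_ hR0
    intro z hz
    refine (hd z ?_).differentiableWithinAt
    have := Metric.mem_closedBall.1 hz
    rw [dist_zero_right] at this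
    exact lt_of_le_of_lt this hR1
  set p := cauchyPowerSeries F 0 ((2 : ℝ≥0)⁻¹ : ℝ≥0) with hpdef
  have hp2 : HasFPowerSeriesOnBall F p 0 ((2 : ℝ≥0)⁻¹ : ℝ≥0) := h _ (by norm_num) (by norm_num)
  have key : ∀ R : ℝ≥0, 0 < R → (R : ℝ) < 1 → HasFPowerSeriesOnBall F p 0 R := by
    intro R hR0 hR1
    have hq := h R hR0 hR1
    rwa [hq.hasFPowerSeriesAt.eq_formalMultilinearSeries hp2.hasFPowerSeriesAt] at hq
  refine ⟨p, ?_, (by norm_num : (0 : ℝ≥0∞) < 1), ?_⟩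
  · apply ENNReal.le_of_forall_nnreal_lt
    intro r hr
    rcases eq_or_lt_of_le (show (0 : ℝ≥0) ≤ r from zero_le) with h0 | h0
    · simp [← h0]
    · exact (key r h0 (by exact_mod_cast hr)).r_le
  · intro y hy
    have hy1 : ‖y‖ < 1 := by
      have := EMetric.mem_ball.1 hy
      rw [edist_zero_right, ← ofReal_norm, ENNReal.ofReal_lt_one] at this
      exact this
    set R : ℝ≥0 := ⟨(‖y‖ + 1) / 2, by positivity⟩ with hR
    have hR0 : 0 < R := by
      rw [← NNReal.coe_lt_coe]
      show (0 : ℝ) < (‖y‖ + 1) / 2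
      positivity
    have hR1 : (R : ℝ) < 1 := by
      show (‖y‖ + 1) / 2 < 1
      linarith
    refine (key R hR0 hR1).hasSum ?_
    rw [EMetric.mem_ball, edist_zero_right]
    have h3 : ‖y‖ < (R : ℝ) := by
      show ‖y‖ < (‖y‖ + 1) / 2
      linarith
    have h4 : ‖y‖₊ < R := by exact_mod_cast h3
    exact_mod_cast h4

theorem statement0 (a c : ℕ → ℂ) (M : ℝ)
    (hM : ∀ k : ℕ, 1 ≤ k → ‖a k‖ ≤ M)
    (hrec : IsMARec a c) :
    ∀ z : ℂ, ‖z‖ < 1 →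
      Summable (fun k : ℕ => ‖a (k + 1) * z ^ (k + 1)‖) ∧
      Summable (fun k : ℕ => ‖c k * z ^ k‖) ∧
      ∑' k : ℕ, c k * z ^ k = Complex.exp (∑' k : ℕ, a (k + 1) * z ^ (k + 1)) := by
  obtain ⟨hc0, hcrec⟩ := hrec
  set M' : ℝ := max M 0 with hM'def
  have hM'0 : 0 ≤ M' := le_max_right _ _
  have hMa : ∀ k : ℕ, ‖a (k + 1)‖ ≤ M' :=
    fun k => (hM (k + 1) (Nat.le_add_left _ _)).trans (le_max_left _ _)
  set a' : ℕ → ℂ := fun n => if n = 0 then 0 else a n with ha'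
  have ha'norm : ∀ n, ‖a' n‖ ≤ M' := by
    intro n
    cases n with
    | zero => simpa [ha'] using hM'0
    | succ m => simpa [ha'] using hMa m
  have hmem : ∀ (z : ℂ) (r : ℝ≥0∞), ‖z‖ < 1 → 1 ≤ r → z ∈ Metric.eball (0 : ℂ) r := by
    intro z r hz hr
    rw [Metric.mem_eball, edist_zero_right]
    refine lt_of_lt_of_le ?_ hr
    rw [← ofReal_norm, ENNReal.ofReal_lt_one]
    exact hz
  -- the power series g(z) = ∑ a' n z^n
  set q := FormalMultilinearSeries.ofScalars ℂ a' with hqdef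
  have hqrad : 1 ≤ q.radius := by
    have h1 := FormalMultilinearSeries.le_radius_of_bound q M' (r := 1) ?_
    · simpa using h1
    · intro n
      rw [hqdef, FormalMultilinearSeries.ofScalars_norm]
      simpa using ha'norm n
  set g := q.sum with hgdef
  have hqb : HasFPowerSeriesOnBall g q 0 1 :=
    (q.hasFPowerSeriesOnBall (lt_of_lt_of_le (by norm_num) hqrad)).mono (by norm_num) hqrad
  have hgsum : ∀ z : ℂ, ‖z‖ < 1 → HasSum (fun n => a' n * z ^ n) (g z) := by
    intro z hz
    have h1 := hqb.hasSum (hmem z 1 hz le_rfl)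
    rw [zero_add] at h1
    apply h1.congr_fun
    intro n
    rw [hqdef, FormalMultilinearSeries.ofScalars_apply_eq, smul_eq_mul]
  have hg0 : g 0 = 0 := by
    have h1 := hgsum 0 (by norm_num)
    have h2 : (fun n => a' n * (0 : ℂ) ^ n) = fun _ => (0 : ℂ) := by
      funext n
      cases n with
      | zero => simp [ha']
      | succ m => simp
    rw [h2] at h1
    exact h1.unique hasSum_zero
  set F : ℂ → ℂ := fun z => Complex.exp (g z) with hFdef
  have hgdiff : ∀ z : ℂ, ‖z‖ < 1 → DifferentiableAt ℂ g z :=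
    fun z hz => (hqb.analyticAt_of_mem (hmem z 1 hz le_rfl)).differentiableAt
  have hFdiff : ∀ z : ℂ, ‖z‖ < 1 → DifferentiableAt ℂ F z := fun z hz => (hgdiff z hz).cexp
  obtain ⟨p, hp⟩ := MAaux_exists_series F hFdiff
  set b := p.coeff with hbdef
  have hprad : 1 ≤ p.radius := hp.r_le
  have hbsum : ∀ z : ℂ, ‖z‖ < 1 → HasSum (fun n => b n * z ^ n) (F z) := by
    intro z hz
    have h1 := hp.hasSum (hmem z 1 hz le_rfl)
    rw [zero_add] at h1
    apply h1.congr_fun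
    intro n
    rw [FormalMultilinearSeries.apply_eq_pow_smul_coeff, smul_eq_mul, mul_comm, hbdef]
  have hbnormsum : ∀ z : ℂ, ‖z‖ < 1 → Summable (fun n => ‖b n * z ^ n‖) := by
    intro z hz
    have h1 := p.summable_norm_apply (x := z) (hmem z p.radius hz hprad)
    apply h1.congr
    intro n
    rw [FormalMultilinearSeries.apply_eq_pow_smul_coeff, smul_eq_mul, mul_comm, hbdef]
  -- derivative of g as a sum
  have hqD : ∀ z : ℂ, ‖z‖ < 1 →
      HasSum (fun n : ℕ => (((n : ℂ) + 1) * a' (n + 1)) * z ^ n) (deriv g z) := by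
    intro z hz
    have h1 := hqb.fderiv.hasSum (hmem z 1 hz le_rfl)
    rw [zero_add] at h1
    have h2 := (ContinuousLinearMap.apply ℂ ℂ (1 : ℂ)).hasSum h1
    simp only [ContinuousLinearMap.apply_apply] at h2
    rw [fderiv_apply_one_eq_deriv] at h2
    apply h2.congr_fun
    intro n
    rw [MAaux_derivSeries_apply_one]
    congr 2
    rw [hqdef]
    simp [FormalMultilinearSeries.coeff, FormalMultilinearSeries.ofScalars]
  -- derivative of F as a sum
  have hpD : ∀ z : ℂ, ‖z‖ < 1 →
      HasSum (fun n : ℕ => (((n : ℂ) + 1) * b (n + 1)) * z ^ n) (deriv F z) := by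
    intro z hz
    have h1 := hp.fderiv.hasSum (hmem z 1 hz le_rfl)
    rw [zero_add] at h1
    have h2 := (ContinuousLinearMap.apply ℂ ℂ (1 : ℂ)).hasSum h1
    simp only [ContinuousLinearMap.apply_apply] at h2
    rw [fderiv_apply_one_eq_deriv] at h2
    apply h2.congr_fun
    intro n
    rw [MAaux_derivSeries_apply_one, hbdef]
  have hderivF : ∀ z : ℂ, ‖z‖ < 1 → deriv F z = F z * deriv g z := by
    intro z hz
    exact ((hgdiff z hz).hasDerivAt.cexp).deriv
  -- Cauchy product
  have hcauchy : ∀ z : ℂ, ‖z‖ < 1 →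
      HasSum (fun n : ℕ => (∑ j ∈ Finset.range (n + 1),
        (((j : ℂ) + 1) * a' (j + 1)) * b (n - j)) * z ^ n) (F z * deriv g z) := by
    intro z hz
    have hu : Summable (fun n : ℕ => ‖(((n : ℂ) + 1) * a' (n + 1)) * z ^ n‖) := by
      have h1 : Summable (fun n : ℕ => (n : ℝ) * ‖z‖ ^ n) := by
        simpa using summable_pow_mul_geometric_of_norm_lt_one 1
          (r := ‖z‖) (by rwa [Real.norm_eq_abs, abs_of_nonneg (norm_nonneg z)])
      have h2 : Summable (fun n : ℕ => ‖z‖ ^ n) :=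
        summable_geometric_of_lt_one (norm_nonneg z) hz
      have hmaj := (h1.add h2).mul_left M'
      apply Summable.of_nonneg_of_le (fun n => norm_nonneg _) ?_ hmaj
      intro n
      rw [norm_mul, norm_mul, norm_pow]
      have h3 : ‖((n : ℂ) + 1)‖ = (n : ℝ) + 1 := by
        rw [show ((n : ℂ) + 1) = ((n + 1 : ℕ) : ℂ) by push_cast; ring, Complex.norm_natCast]
        push_cast; ring
      rw [h3]
      calc ((n : ℝ) + 1) * ‖a' (n + 1)‖ * ‖z‖ ^ n
          ≤ ((n : ℝ) + 1) * M' * ‖z‖ ^ n := by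
            apply mul_le_mul_of_nonneg_right
              (mul_le_mul_of_nonneg_left (ha'norm (n + 1)) (by positivity)) (by positivity)
        _ = M' * ((n : ℝ) * ‖z‖ ^ n + ‖z‖ ^ n) := by ring
    have hv := hbnormsum z hz
    have hsumnorm := summable_norm_sum_mul_range_of_summable_norm hu hv
    have htsum := tsum_mul_tsum_eq_tsum_sum_range_of_summable_norm hu hv
    have hsummable := hsumnorm.of_norm
    have h5 := hsummable.hasSum
    rw [← htsum, (hqD z hz).tsum_eq, (hbsum z hz).tsum_eq, mul_comm (deriv g z)] at h5
    apply h5.congr_fun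
    intro n
    rw [Finset.sum_mul]
    apply Finset.sum_congr rfl
    intro k hk
    have hkn : k ≤ n := Nat.lt_succ_iff.1 (Finset.mem_range.1 hk)
    have hzz : z ^ k * z ^ (n - k) = z ^ n := by rw [← pow_add, Nat.add_sub_cancel' hkn]
    rw [← hzz]
    ring
  -- coefficient identity
  have hab : (fun n : ℕ => ((n : ℂ) + 1) * b (n + 1)) =
      (fun n : ℕ => ∑ j ∈ Finset.range (n + 1), (((j : ℂ) + 1) * a' (j + 1)) * b (n - j)) := by
    apply MAaux_coeff_unique _ _ (fun z => F z * deriv g z)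
    · intro z hz
      have := hpD z hz
      rwa [hderivF z hz] at this
    · exact fun z hz => hcauchy z hz
  have hb0 : b 0 = 1 := by
    have h1 := hp.coeff_zero (fun _ => 1)
    have h2 : b 0 = p 0 (fun _ => 1) := rfl
    rw [h2, h1, hFdef]
    show Complex.exp (g 0) = 1
    rw [hg0, Complex.exp_zero]
  -- b = c by strong induction
  have hbc : ∀ n, b n = c n := by
    intro n
    induction n using Nat.strong_induction_on with
    | _ n ih =>
      match n with
      | 0 => rw [hb0, hc0]
      | Nat.succ k =>
        have hk1 : ((k : ℂ) + 1) ≠ 0 := Nat.cast_add_one_ne_zero k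
        have hkey := congrFun hab k
        have hrefl : (∑ j ∈ Finset.range (k + 1),
              (fun j : ℕ => (((j : ℂ) + 1) * a' (j + 1)) * b (k - j)) (k - j))
            = ∑ j ∈ Finset.range (k + 1), (((j : ℂ) + 1) * a' (j + 1)) * b (k - j) := by
          simpa using Finset.sum_range_reflect
            (fun j : ℕ => (((j : ℂ) + 1) * a' (j + 1)) * b (k - j)) (k + 1)
        rw [hcrec k]
        have hstep : ∀ j ∈ Finset.range (k + 1),
            (1 - (j : ℂ) / ((k : ℂ) + 1)) * a (k + 1 - j) * c j
            = ((k : ℂ) + 1)⁻¹ *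
              ((fun j : ℕ => (((j : ℂ) + 1) * a' (j + 1)) * b (k - j)) (k - j)) := by
          intro j hj
          have hjk : j ≤ k := Nat.lt_succ_iff.1 (Finset.mem_range.1 hj)
          beta_reduce
          rw [Nat.sub_sub_self hjk, Nat.cast_sub hjk, ih j (Nat.lt_succ_of_le hjk)]
          have ha'eq : a' (k - j + 1) = a (k - j + 1) := by simp [ha']
          rw [ha'eq, show k + 1 - j = k - j + 1 by omega]
          have hcoef : (1 : ℂ) - (j : ℂ) / ((k : ℂ) + 1)
              = ((k : ℂ) + 1)⁻¹ * ((k : ℂ) - (j : ℂ) + 1) := by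
            field_simp
            ring
          rw [hcoef]
          ring
        rw [Finset.sum_congr rfl hstep, ← Finset.mul_sum, hrefl, ← hkey,
          inv_mul_cancel_left₀ hk1]
  -- conclusion
  intro z hz
  refine ⟨?_, ?_, ?_⟩
  · have hmaj : Summable (fun k : ℕ => (M' * ‖z‖) * ‖z‖ ^ k) :=
      (summable_geometric_of_lt_one (norm_nonneg z) hz).mul_left _
    apply Summable.of_nonneg_of_le (fun n => norm_nonneg _) ?_ hmaj
    intro n
    rw [norm_mul, norm_pow, pow_succ]
    calc ‖a (n + 1)‖ * (‖z‖ ^ n * ‖z‖)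
        ≤ M' * (‖z‖ ^ n * ‖z‖) := mul_le_mul_of_nonneg_right (hMa n) (by positivity)
      _ = (M' * ‖z‖) * ‖z‖ ^ n := by ring
  · exact (hbnormsum z hz).congr (fun n => by rw [hbc n])
  · have h1 := hbsum z hz
    have h2 : ∑' k : ℕ, c k * z ^ k = F z := by
      rw [← h1.tsum_eq]
      exact tsum_congr fun n => by rw [hbc n]
    have h3 := hgsum z hz
    have h4 : g z = ∑' k : ℕ, a (k + 1) * z ^ (k + 1) := by
      rw [← h3.tsum_eq, Summable.tsum_eq_zero_add h3.summable]
      simp [ha']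
    rw [h2, hFdef]
    show Complex.exp (g z) = _
    rw [h4]
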